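/- Let T > 0, γ > 0, r > 0, p₂ < 1 with p₂ ≠ 0, λ > 0 and V̄ > 0. Let W_T be a Gaussian random variable with mean 0 and variance T and set Z := exp(−(r + γ²/2)T − γ W_T). Then the budget identity for the optimal constrained terminal wealth max(V̄, (λZ)^(1/(p₂−1))) holds: E[Z · max(V̄, (λZ)^(1/(p₂−1)))] = λ^(1/(p₂−1)) · ξ(T, 0, 1, p₂/(p₂−1), 0, V̄^(p₂−1)/λ) + V̄ · ξ(T, 0, 1, 1, V̄^(p₂−1)/λ, +∞). -/

import Mathlib

open MeasureTheory ProbabilityTheory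

open scoped ENNReal

/-- Cumulative distribution function of the standard normal distribution. -/
noncomputable def Phi (x : ℝ) : ℝ := ((gaussianReal 0 1) (Set.Iic x)).toReal

/-- `Φ(d̄(x) + kγ√(s − t))`, where `d̄(x) = (ln(z/x) − (r + γ²/2)(s − t)) / (γ √(s − t))`
for `x ∈ (0, ∞)`, with the conventions `Φ(d̄(0) + u) = 1` and `Φ(d̄(∞) + u) = 0`. -/
noncomputable def PhiDbar (γ r s t z k : ℝ) (x : ℝ≥0∞) : ℝ :=
  if x = 0 then 1
  else if x = ⊤ then 0
  else Phi ((Real.log (z / x.toReal) - (r + γ ^ 2 / 2) * (s - t)) / (γ * Real.sqrt (s - t))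
      + k * γ * Real.sqrt (s - t))

/-- `ξ(s, t, z, k, a, b; γ, r)`. -/
noncomputable def xi (γ r s t z k : ℝ) (a b : ℝ≥0∞) : ℝ :=
  z ^ k * Real.exp (-k * (r + γ ^ 2 / 2) * (s - t) + k ^ 2 * γ ^ 2 / 2 * (s - t)) *
    (PhiDbar γ r s t z k a - PhiDbar γ r s t z k b) * (if a < b then 1 else 0)

/-- `h(t₁, t₂) = exp((μ_F − σ_F²/2 − σ_F r/γ − σ_F γ/2)(t₂ − t₁))`. -/
noncomputable def hF (γ r μF σF t₁ t₂ : ℝ) : ℝ :=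
  Real.exp ((μF - σF ^ 2 / 2 - σF * r / γ - σF * γ / 2) * (t₂ - t₁))

namespace BudgetAux

lemma toNNReal_ne_zero {T : ℝ} (hT : 0 < T) : Real.toNNReal T ≠ 0 := by
  simp [Real.toNNReal_eq_zero, not_le, hT]

lemma phi_eq {T : ℝ} (hT : 0 < T) (a : ℝ) :
    ((gaussianReal 0 T.toNNReal) (Set.Iic a)).toReal = Phi (a / Real.sqrt T) := by
  have hs : (0:ℝ) < Real.sqrt T := Real.sqrt_pos.mpr hT
  have hmap : (gaussianReal 0 1).map (Real.sqrt T * ·) = gaussianReal 0 T.toNNReal := by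
    rw [gaussianReal_map_const_mul]
    congr 1
    · ring
    · ext
      simp [Real.sq_sqrt hT.le, Real.coe_toNNReal _ hT.le]
  rw [← hmap, Measure.map_apply (by fun_prop) measurableSet_Iic]
  have hpre : (Real.sqrt T * ·) ⁻¹' (Set.Iic a) = Set.Iic (a / Real.sqrt T) := by
    ext x
    simp only [Set.mem_preimage, Set.mem_Iic]
    rw [le_div_iff₀ hs, mul_comm]
  rw [hpre, Phi]

lemma tilt_eq {T : ℝ} (c : ℝ) (hT : 0 < T) (x : ℝ) :
    Real.exp (c * x) * gaussianPDFReal 0 T.toNNReal x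
      = Real.exp (c ^ 2 * T / 2) * gaussianPDFReal 0 T.toNNReal (x - c * T) := by
  unfold gaussianPDFReal
  rw [Real.coe_toNNReal _ hT.le]
  rw [mul_left_comm, mul_left_comm (Real.exp (c ^ 2 * T / 2)), ← Real.exp_add, ← Real.exp_add]
  congr 2
  field_simp
  ring

lemma integrable_tilt {T : ℝ} (c : ℝ) (hT : 0 < T) :
    Integrable (fun x => Real.exp (c * x) * gaussianPDFReal 0 T.toNNReal x) := by
  simp_rw [fun x => tilt_eq c hT x]
  exact ((integrable_gaussianPDFReal 0 T.toNNReal).comp_sub_right (c * T)).const_mul _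

lemma int_total {T : ℝ} (c : ℝ) (hT : 0 < T) :
    ∫ x, Real.exp (c * x) * gaussianPDFReal 0 T.toNNReal x = Real.exp (c ^ 2 * T / 2) := by
  simp_rw [fun x => tilt_eq c hT x]
  rw [integral_const_mul, integral_sub_right_eq_self (gaussianPDFReal 0 T.toNNReal) (c * T),
    integral_gaussianPDFReal_eq_one 0 (toNNReal_ne_zero hT), mul_one]

lemma int_Iic {T : ℝ} (c b : ℝ) (hT : 0 < T) :
    ∫ x in Set.Iic b, Real.exp (c * x) * gaussianPDFReal 0 T.toNNReal x
      = Real.exp (c ^ 2 * T / 2) * Phi ((b - c * T) / Real.sqrt T) := by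
  simp_rw [fun x => tilt_eq c hT x]
  rw [integral_const_mul]
  congr 1
  have h1 : ∫ x in Set.Iic b, gaussianPDFReal 0 T.toNNReal (x - c * T)
      = ∫ x in Set.Iic (b - c * T), gaussianPDFReal 0 T.toNNReal x := by
    rw [← integral_indicator measurableSet_Iic, ← integral_indicator measurableSet_Iic]
    have h2 : ∀ x : ℝ, (Set.Iic b).indicator (fun y => gaussianPDFReal 0 T.toNNReal (y - c * T)) x
        = (Set.Iic (b - c * T)).indicator (gaussianPDFReal 0 T.toNNReal) (x - c * T) := by
      intro x
      by_cases hx : x ≤ b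
      · simp [Set.indicator_apply, hx, sub_le_sub_iff_right]
      · simp [Set.indicator_apply, hx, sub_le_sub_iff_right]
    simp_rw [h2]
    exact integral_sub_right_eq_self _ (c * T)
  rw [h1, ← phi_eq hT, gaussianReal_apply_eq_integral 0 (toNNReal_ne_zero hT),
    ENNReal.toReal_ofReal (integral_nonneg (gaussianPDFReal_nonneg 0 T.toNNReal))]

lemma int_Iio {T : ℝ} (c b : ℝ) (hT : 0 < T) :
    ∫ x in Set.Iio b, Real.exp (c * x) * gaussianPDFReal 0 T.toNNReal x
      = Real.exp (c ^ 2 * T / 2) * Phi ((b - c * T) / Real.sqrt T) := by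
  rw [setIntegral_congr_set (Iio_ae_eq_Iic (a := b))]
  exact int_Iic c b hT

lemma int_Ici {T : ℝ} (c b : ℝ) (hT : 0 < T) :
    ∫ x in Set.Ici b, Real.exp (c * x) * gaussianPDFReal 0 T.toNNReal x
      = Real.exp (c ^ 2 * T / 2) * (1 - Phi ((b - c * T) / Real.sqrt T)) := by
  have htot := int_total c hT
  have hadd := intervalIntegral.integral_Iio_add_Ici (f := fun x => Real.exp (c * x) * gaussianPDFReal 0 T.toNNReal x)
    (μ := volume) (b := b) ((integrable_tilt c hT).integrableOn) ((integrable_tilt c hT).integrableOn)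
  rw [int_Iio c b hT, htot] at hadd
  linarith [hadd]

lemma integral_gaussian_pdf {T : ℝ} (hT : 0 < T) (g : ℝ → ℝ) :
    ∫ x, g x ∂(gaussianReal 0 T.toNNReal)
      = ∫ x, gaussianPDFReal 0 T.toNNReal x * g x := by
  rw [gaussianReal_of_var_ne_zero _ (toNNReal_ne_zero hT)]
  have : gaussianPDF 0 T.toNNReal
      = fun x => ((gaussianPDFReal 0 T.toNNReal x).toNNReal : ℝ≥0∞) := rfl
  rw [this, integral_withDensity_eq_integral_smul
    ((measurable_gaussianPDFReal 0 T.toNNReal).real_toNNReal) g]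
  congr 1
  ext x
  simp [NNReal.smul_def, Real.coe_toNNReal _ (gaussianPDFReal_nonneg 0 T.toNNReal x)]

end BudgetAux

open BudgetAux in
theorem budget_identity_optimal_constrained_terminal_wealth
    (T γ r p₂ lam V : ℝ)
    (hT : 0 < T) (hγ : 0 < γ) (hr : 0 < r) (hp : p₂ < 1) (hp0 : p₂ ≠ 0)
    (hlam : 0 < lam) (hV : 0 < V) :
    (∫ w, Real.exp (-(r + γ ^ 2 / 2) * T - γ * w) *
        max V ((lam * Real.exp (-(r + γ ^ 2 / 2) * T - γ * w)) ^ (1 / (p₂ - 1)))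
        ∂(gaussianReal 0 (Real.toNNReal T)))
      = lam ^ (1 / (p₂ - 1)) *
          xi γ r T 0 1 (p₂ / (p₂ - 1)) 0 (ENNReal.ofReal (V ^ (p₂ - 1) / lam))
        + V * xi γ r T 0 1 1 (ENNReal.ofReal (V ^ (p₂ - 1) / lam)) ⊤ := by
  have hp1 : p₂ - 1 < 0 := by linarith
  have hp1' : p₂ - 1 ≠ 0 := ne_of_lt hp1
  have hβ : (1:ℝ) / (p₂ - 1) ≤ 0 := le_of_lt (div_neg_of_pos_of_neg one_pos hp1)
  set c₀ : ℝ := V ^ (p₂ - 1) / lam with hc₀def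
  have hc₀ : 0 < c₀ := div_pos (Real.rpow_pos_of_pos hV _) hlam
  set w₀ : ℝ := (-Real.log c₀ - (r + γ ^ 2 / 2) * T) / γ with hw₀def
  set k₁ : ℝ := p₂ / (p₂ - 1) with hk₁def
  have hk₁ : 1 + 1 / (p₂ - 1) = k₁ := by rw [hk₁def]; field_simp; ring
  have hVpow : (V ^ (p₂ - 1)) ^ ((1:ℝ) / (p₂ - 1)) = V := by
    rw [← Real.rpow_mul hV.le, mul_one_div_cancel hp1', Real.rpow_one]
  have hcrit : ∀ w : ℝ, Real.exp (-(r + γ ^ 2 / 2) * T - γ * w) ≤ c₀ ↔ w₀ ≤ w := by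
    intro w
    rw [show c₀ = Real.exp (Real.log c₀) from (Real.exp_log hc₀).symm, Real.exp_le_exp,
      hw₀def, div_le_iff₀ hγ]
    constructor <;> intro h <;> nlinarith
  -- pointwise identity
  have hmax : ∀ w : ℝ, Real.exp (-(r + γ ^ 2 / 2) * T - γ * w) *
        max V ((lam * Real.exp (-(r + γ ^ 2 / 2) * T - γ * w)) ^ (1 / (p₂ - 1)))
      = (Set.Ici w₀).indicator (fun w =>
          (lam ^ ((1:ℝ) / (p₂ - 1)) * Real.exp (-(k₁ * ((r + γ ^ 2 / 2) * T)))) *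
            Real.exp (-(k₁ * γ) * w)) w
        + (Set.Iio w₀).indicator (fun w =>
          (V * Real.exp (-((r + γ ^ 2 / 2) * T))) * Real.exp (-γ * w)) w := by
    intro w
    set Z : ℝ := Real.exp (-(r + γ ^ 2 / 2) * T - γ * w) with hZdef
    have hZpos : 0 < Z := Real.exp_pos _
    by_cases hw : w₀ ≤ w
    · rw [Set.indicator_of_mem (Set.mem_Ici.mpr hw),
        Set.indicator_of_notMem (by simpa using hw), add_zero]
      have hle : lam * Z ≤ V ^ (p₂ - 1) := by
        have := (hcrit w).mpr hw
        rw [← hZdef] at this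
        calc lam * Z ≤ lam * c₀ := by nlinarith
          _ = V ^ (p₂ - 1) := by rw [hc₀def]; field_simp
      have hVle : V ≤ (lam * Z) ^ ((1:ℝ) / (p₂ - 1)) := by
        calc V = (V ^ (p₂ - 1)) ^ ((1:ℝ) / (p₂ - 1)) := hVpow.symm
          _ ≤ (lam * Z) ^ ((1:ℝ) / (p₂ - 1)) :=
            Real.rpow_le_rpow_of_nonpos (by positivity) hle hβ
      rw [max_eq_right hVle, Real.mul_rpow hlam.le hZpos.le, hZdef, ← Real.exp_mul,
        mul_left_comm, mul_assoc]
      congr 1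
      rw [← Real.exp_add, ← Real.exp_add]
      congr 1
      rw [hk₁def]
      field_simp
      ring
    · rw [Set.indicator_of_notMem (by simpa using hw),
        Set.indicator_of_mem (Set.mem_Iio.mpr (lt_of_not_ge hw)), zero_add]
      have hgt : V ^ (p₂ - 1) ≤ lam * Z := by
        have := (hcrit w).not.mpr hw
        rw [← hZdef] at this
        have h2 : c₀ ≤ Z := le_of_not_ge (fun h => this h)
        calc V ^ (p₂ - 1) = lam * c₀ := by rw [hc₀def]; field_simp
          _ ≤ lam * Z := by nlinarith
      have hVge : (lam * Z) ^ ((1:ℝ) / (p₂ - 1)) ≤ V := by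
        calc (lam * Z) ^ ((1:ℝ) / (p₂ - 1))
            ≤ (V ^ (p₂ - 1)) ^ ((1:ℝ) / (p₂ - 1)) :=
              Real.rpow_le_rpow_of_nonpos (Real.rpow_pos_of_pos hV _) hgt hβ
          _ = V := hVpow
      rw [max_eq_left hVge, hZdef, mul_comm, mul_assoc]
      congr 1
      rw [← Real.exp_add]
      congr 1
      ring
  rw [integral_gaussian_pdf hT]
  simp_rw [hmax, mul_add]
  have hind1 : ∀ x : ℝ, gaussianPDFReal 0 T.toNNReal x *
      (Set.Ici w₀).indicator (fun w =>
        (lam ^ ((1:ℝ) / (p₂ - 1)) * Real.exp (-(k₁ * ((r + γ ^ 2 / 2) * T)))) *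
          Real.exp (-(k₁ * γ) * w)) x
      = (Set.Ici w₀).indicator (fun w =>
        (lam ^ ((1:ℝ) / (p₂ - 1)) * Real.exp (-(k₁ * ((r + γ ^ 2 / 2) * T)))) *
          (Real.exp (-(k₁ * γ) * w) * gaussianPDFReal 0 T.toNNReal w)) x := by
    intro x
    by_cases h : x ∈ Set.Ici w₀ <;> simp [h] <;> ring
  have hind2 : ∀ x : ℝ, gaussianPDFReal 0 T.toNNReal x *
      (Set.Iio w₀).indicator (fun w =>
        (V * Real.exp (-((r + γ ^ 2 / 2) * T))) * Real.exp (-γ * w)) x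
      = (Set.Iio w₀).indicator (fun w =>
        (V * Real.exp (-((r + γ ^ 2 / 2) * T))) *
          (Real.exp (-γ * w) * gaussianPDFReal 0 T.toNNReal w)) x := by
    intro x
    by_cases h : x ∈ Set.Iio w₀ <;> simp [h] <;> ring
  simp_rw [hind1, hind2]
  rw [integral_add
    (((((integrable_tilt (-(k₁ * γ)) hT)).const_mul _)).indicator measurableSet_Ici)
    (((((integrable_tilt (-γ) hT)).const_mul _)).indicator measurableSet_Iio)]
  rw [integral_indicator measurableSet_Ici, integral_indicator measurableSet_Iio,
    integral_const_mul, integral_const_mul, int_Ici (-(k₁ * γ)) w₀ hT, int_Iio (-γ) w₀ hT]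
  -- now the algebraic part
  have harg : ∀ k : ℝ, (w₀ - -(k * γ) * T) / Real.sqrt T
      = (Real.log (1 / c₀) - (r + γ ^ 2 / 2) * (T - 0)) / (γ * Real.sqrt (T - 0))
        + k * γ * Real.sqrt (T - 0) := by
    intro k
    have hs : (0:ℝ) < Real.sqrt T := Real.sqrt_pos.mpr hT
    have hs2 : Real.sqrt T * Real.sqrt T = T := Real.mul_self_sqrt hT.le
    rw [sub_zero, one_div, Real.log_inv, hw₀def]
    field_simp
    linear_combination (-2*γ^2*k) * hs2
  have hPD0 : PhiDbar γ r T 0 1 k₁ 0 = 1 := by rw [PhiDbar]; simp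
  have hPDtop : PhiDbar γ r T 0 1 1 ⊤ = 0 := by rw [PhiDbar]; simp
  have hne0 : (ENNReal.ofReal c₀) ≠ 0 := by simp [ENNReal.ofReal_eq_zero, hc₀.not_ge]
  have hnetop : (ENNReal.ofReal c₀) ≠ ⊤ := ENNReal.ofReal_ne_top
  have hPDc : ∀ k : ℝ, PhiDbar γ r T 0 1 k (ENNReal.ofReal c₀)
      = Phi ((Real.log (1 / c₀) - (r + γ ^ 2 / 2) * (T - 0)) / (γ * Real.sqrt (T - 0))
        + k * γ * Real.sqrt (T - 0)) := by
    intro k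
    rw [PhiDbar, if_neg hne0, if_neg hnetop, ENNReal.toReal_ofReal hc₀.le]
  have hiflt1 : ((0:ℝ≥0∞) < ENNReal.ofReal c₀) := ENNReal.ofReal_pos.mpr hc₀
  have hiflt2 : (ENNReal.ofReal c₀ < ⊤) := ENNReal.ofReal_lt_top
  rw [xi, xi, hPD0, hPDtop, hPDc, hPDc, if_pos hiflt1, if_pos hiflt2, Real.one_rpow,
    ← harg k₁, ← harg 1]
  have hexp1 : Real.exp (-(k₁ * ((r + γ ^ 2 / 2) * T))) * Real.exp ((-(k₁ * γ)) ^ 2 * T / 2)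
      = Real.exp (-k₁ * (r + γ ^ 2 / 2) * (T - 0) + k₁ ^ 2 * γ ^ 2 / 2 * (T - 0)) := by
    rw [← Real.exp_add]; congr 1; ring
  have hexp2 : Real.exp (-((r + γ ^ 2 / 2) * T)) * Real.exp ((-γ) ^ 2 * T / 2)
      = Real.exp (-1 * (r + γ ^ 2 / 2) * (T - 0) + 1 ^ 2 * γ ^ 2 / 2 * (T - 0)) := by
    rw [← Real.exp_add]; congr 1; ring
  have hphi : ((w₀ - -(1 * γ) * T) / Real.sqrt T) = ((w₀ - -γ * T) / Real.sqrt T) := by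
    ring_nf
  rw [hphi, ← hexp1, ← hexp2, Real.one_rpow]
  ring
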